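/- Let k ≥ 1 and let n_1,…,n_k ≥ 1 and m_1,…,m_k ≥ 1 be integers. In the group B_k = ⟨b_1,…,b_k | b_i^{n_i} = b_{i+1}^{m_{i+1}} for 1 ≤ i ≤ k−1⟩, the group B_k is nontrivial and the elements b_1^{m_1} and b_k^{n_k} have infinite order. -/

import Mathlib

/-- The relators of the group `B_k = ⟨b_1,…,b_k | b_i^{n_i} = b_{i+1}^{m_{i+1}}
(1 ≤ i ≤ k−1)⟩`, where the generator `i : Fin k` is `b_{i+1}`. -/
def chainRels (k : ℕ) (n m : Fin k → ℤ) : Set (FreeGroup (Fin k)) :=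
  {x | ∃ i j : Fin k, (i : ℕ) + 1 = (j : ℕ) ∧
      x = FreeGroup.of i ^ n i * (FreeGroup.of j ^ m j)⁻¹}

/-- Rational weights `q_i` satisfying `n_i q_i = m_{i+1} q_{i+1}`. -/
def chainQ (k : ℕ) (n m : Fin k → ℤ) : ℕ → ℚ
  | 0 => 1
  | (i + 1) =>
    if h : i + 1 < k then
      (n ⟨i, Nat.lt_of_succ_lt h⟩ : ℚ) * chainQ k n m i / (m ⟨i + 1, h⟩ : ℚ)
    else 0

lemma chainQ_pos (k : ℕ) (n m : Fin k → ℤ) (hn : ∀ i, 1 ≤ n i) (hm : ∀ i, 1 ≤ m i) :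
    ∀ i, i < k → 0 < chainQ k n m i := by
  intro i
  induction i with
  | zero => intro _; simp [chainQ]
  | succ i ih =>
    intro h
    have hi : 0 < chainQ k n m i := ih (Nat.lt_of_succ_lt h)
    have hn' : (0 : ℚ) < (n ⟨i, Nat.lt_of_succ_lt h⟩ : ℚ) := by
      exact_mod_cast lt_of_lt_of_le one_pos (hn _)
    have hm' : (0 : ℚ) < (m ⟨i + 1, h⟩ : ℚ) := by
      exact_mod_cast lt_of_lt_of_le one_pos (hm _)
    simp only [chainQ, dif_pos h]
    positivity

lemma chainQ_rel (k : ℕ) (n m : Fin k → ℤ) (hm : ∀ i, 1 ≤ m i)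
    (i j : Fin k) (hij : (i : ℕ) + 1 = (j : ℕ)) :
    (n i : ℚ) * chainQ k n m i = (m j : ℚ) * chainQ k n m j := by
  have hm0 : (m j : ℚ) ≠ 0 := by
    have := hm j; positivity
  have hlt : (i : ℕ) + 1 < k := hij ▸ j.isLt
  have hji : j = ⟨(i : ℕ) + 1, hlt⟩ := by ext; exact hij.symm
  have hii : (⟨(i : ℕ), Nat.lt_of_succ_lt hlt⟩ : Fin k) = i := by ext; rfl
  subst hji
  simp only [chainQ, dif_pos hlt, hii]
  field_simp

theorem stmt2 (k : ℕ) (hk : 0 < k) (n m : Fin k → ℤ)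
    (hn : ∀ i, 1 ≤ n i) (hm : ∀ i, 1 ≤ m i) :
    Nontrivial (PresentedGroup (chainRels k n m)) ∧
    ¬ IsOfFinOrder
      ((PresentedGroup.of (rels := chainRels k n m) ⟨0, hk⟩) ^ m ⟨0, hk⟩) ∧
    ¬ IsOfFinOrder
      ((PresentedGroup.of (rels := chainRels k n m) ⟨k - 1, Nat.sub_lt hk Nat.one_pos⟩) ^
        n ⟨k - 1, Nat.sub_lt hk Nat.one_pos⟩) := by
  set f : Fin k → Multiplicative ℚ := fun i => Multiplicative.ofAdd (chainQ k n m i) with hf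
  have hrel : ∀ r ∈ chainRels k n m, FreeGroup.lift f r = 1 := by
    rintro r ⟨i, j, hij, rfl⟩
    have key := chainQ_rel k n m hm i j hij
    simp only [map_mul, map_zpow, map_inv, FreeGroup.lift_apply_of, hf]
    rw [← ofAdd_zsmul, ← ofAdd_zsmul, mul_inv_eq_one]
    congr 1
  set φ : PresentedGroup (chainRels k n m) →* Multiplicative ℚ :=
    PresentedGroup.toGroup hrel with hφ
  have hφof : ∀ x : Fin k, φ (PresentedGroup.of x) = f x := fun x => PresentedGroup.toGroup.of hrel
  have key : ∀ (x : Fin k) (e : ℤ), 1 ≤ e →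
      ¬ IsOfFinOrder ((PresentedGroup.of (rels := chainRels k n m) x) ^ e) := by
    intro x e he hfin
    have hfin2 : IsOfFinOrder (φ (PresentedGroup.of (rels := chainRels k n m) x ^ e)) :=
      φ.isOfFinOrder hfin
    rw [map_zpow, hφof] at hfin2
    obtain ⟨p, hp, hpe⟩ := isOfFinOrder_iff_pow_eq_one.mp hfin2
    have h0 : (p : ℚ) * (e * chainQ k n m x) = 0 := by
      have := congrArg Multiplicative.toAdd hpe
      simpa [hf, ← ofAdd_zsmul, zsmul_eq_mul, ← ofAdd_nsmul, nsmul_eq_mul] using this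
    have hq : 0 < chainQ k n m x := chainQ_pos k n m hn hm x x.isLt
    have he' : (0 : ℚ) < (e : ℚ) := by exact_mod_cast lt_of_lt_of_le one_pos he
    have hp' : (0 : ℚ) < (p : ℚ) := by exact_mod_cast hp
    nlinarith [mul_pos hp' (mul_pos he' hq)]
  refine ⟨?_, key _ _ (hm _), key _ _ (hn _)⟩
  refine ⟨PresentedGroup.of ⟨0, hk⟩, 1, fun h => ?_⟩
  have := congrArg φ h
  rw [hφof, map_one] at this
  have : chainQ k n m 0 = 0 := by
    simpa [hf, ofAdd_eq_one] using this
  simp [chainQ] at this
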